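/- Let K' = [[K*, v*, x*],[−v*ᵀ, 0, 0],[−x*ᵀ, 0, 0]] with K* ∈ so(n), v*,x* ∈ ℝⁿ linearly independent, and let P be the orthogonal projection of ℝⁿ onto span{v*, x*}^⊥. Then for each even k, the sum of all principal (k+4)×(k+4) minors of K' whose index sets include both n+1 and n+2 equals (‖v*‖²‖x*‖² − (v*·x*)²) · tr(Λᵏ(PK*P)). -/

import Mathlib

/-- The skew-symmetric matrix `K' = [[K*, v*, x*],[−v*ᵀ, 0, 0],[−x*ᵀ, 0, 0]]`. -/
def Kprime (n : ℕ) (K : Matrix (Fin n) (Fin n) ℝ) (v x : Fin n → ℝ) :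
    Matrix (Fin (n + 2)) (Fin (n + 2)) ℝ :=
  Matrix.of fun i j =>
    if hi : i.val < n then
      if hj : j.val < n then K ⟨i.val, hi⟩ ⟨j.val, hj⟩
      else if j.val = n then v ⟨i.val, hi⟩
      else x ⟨i.val, hi⟩
    else if hj : j.val < n then
      (if i.val = n then -v ⟨j.val, hj⟩ else -x ⟨j.val, hj⟩)
    else 0

open Matrix Finset Polynomial

set_option maxHeartbeats 1000000

section Helpers
noncomputable section
variable {R : Type*} [CommRing R] {N : ℕ}

lemma det_ite_unit_rows (s : Finset (Fin N)) (M : Matrix (Fin N) (Fin N) R) :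
    (Matrix.of fun i j => if i ∈ s then M i j else if j = i then (1:R) else 0).det
      = (M.submatrix (fun i : {i : Fin N // i ∈ s} => (i : Fin N))
          (fun i : {i : Fin N // i ∈ s} => (i : Fin N))).det := by
  classical
  rw [← Matrix.det_submatrix_equiv_self (Equiv.sumCompl (· ∈ s))]
  have hEq : (Matrix.of fun i j => if i ∈ s then M i j else if j = i then (1:R) else 0).submatrix
      (Equiv.sumCompl (· ∈ s)) (Equiv.sumCompl (· ∈ s))
      = Matrix.fromBlocks
          (M.submatrix (fun i : {i : Fin N // i ∈ s} => (i : Fin N))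
            (fun i : {i : Fin N // i ∈ s} => (i : Fin N)))
          (Matrix.of fun (i : {i : Fin N // i ∈ s}) (j : {j : Fin N // ¬ j ∈ s}) => M ↑i ↑j)
          0 1 := by
    ext i j
    rcases i with i | i <;> rcases j with j | j
    · simp [Matrix.submatrix, i.2]
    · simp [Matrix.submatrix, i.2]
    · simp only [Matrix.submatrix_apply, Equiv.sumCompl_apply_inl, Equiv.sumCompl_apply_inr,
        Matrix.of_apply, Matrix.fromBlocks_apply₂₁]
      rw [if_neg i.2, if_neg]
      · rfl
      · intro h; exact i.2 (h ▸ j.2)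
    · simp only [Matrix.submatrix_apply, Equiv.sumCompl_apply_inr, Matrix.of_apply,
        Matrix.fromBlocks_apply₂₂]
      rw [if_neg i.2]
      simp [Matrix.one_apply, Subtype.ext_iff, eq_comm]
  rw [hEq, Matrix.det_fromBlocks_zero₂₁, Matrix.det_one, mul_one]

lemma det_diagonal_add (d : Fin N → R) (M : Matrix (Fin N) (Fin N) R) :
    (Matrix.diagonal d + M).det
      = ∑ s : Finset (Fin N), (∏ i ∈ sᶜ, d i) *
          (M.submatrix (fun i : {i : Fin N // i ∈ s} => (i : Fin N))
            (fun i : {i : Fin N // i ∈ s} => (i : Fin N))).det := by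
  classical
  set e : Fin N → (Fin N → R) := fun i j => if j = i then (1:R) else 0 with he
  have hrow : (fun i => Matrix.diagonal d i) = fun i => d i • e i := by
    funext i j
    by_cases h : i = j <;> simp [Matrix.diagonal_apply, e, h, eq_comm]
  have h0 : (Matrix.diagonal d + M).det
      = (Matrix.detRowAlternating : (Fin N → R) [⋀^Fin N]→ₗ[R] R)
          (fun i => Matrix.diagonal d i + M i) := rfl
  rw [h0, show (fun i => Matrix.diagonal d i + M i) = ((fun i => Matrix.diagonal d i) + fun i => M i) from rfl,
    ← AlternatingMap.coe_multilinearMap, MultilinearMap.map_add_univ]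
  have hterm : ∀ s : Finset (Fin N),
      (Matrix.detRowAlternating : (Fin N → R) [⋀^Fin N]→ₗ[R] R).toMultilinearMap
          (s.piecewise (fun i => Matrix.diagonal d i) M)
      = (∏ i ∈ s, d i) *
          (M.submatrix (fun i : {i : Fin N // i ∈ sᶜ} => (i : Fin N))
            (fun i : {i : Fin N // i ∈ sᶜ} => (i : Fin N))).det := by
    intro s
    set g : Fin N → (Fin N → R) := s.piecewise e M with hg
    have h1 : s.piecewise (fun i => Matrix.diagonal d i) M
        = s.piecewise (fun i => d i • g i) g := by
      funext i
      by_cases h : i ∈ s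
      · simp only [Finset.piecewise, h, if_true, hg]
        exact congrFun hrow i
      · simp only [Finset.piecewise, h, if_false, hg]
    rw [h1, MultilinearMap.map_piecewise_smul]
    have h2 : Matrix.of g
        = (Matrix.of fun i j => if i ∈ sᶜ then M i j else if j = i then (1:R) else 0) := by
      ext i j
      by_cases h : i ∈ s
      · simp [hg, Finset.piecewise, e, h]
      · simp [hg, Finset.piecewise, h]
    have h3 : (Matrix.detRowAlternating : (Fin N → R) [⋀^Fin N]→ₗ[R] R).toMultilinearMap g
        = (Matrix.of g).det := rfl
    rw [h3, h2, det_ite_unit_rows, smul_eq_mul]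
  rw [Finset.sum_congr rfl (fun s _ => hterm s)]
  refine Fintype.sum_bijective (fun s : Finset (Fin N) => sᶜ) (Function.Involutive.bijective (fun s => compl_compl s)) _ _
    (fun s => ?_)
  simp [compl_compl]

lemma det_submatrix_subtype {m : ℕ} (M : Matrix (Fin N) (Fin N) R) (s : Finset (Fin N))
    (h : s.card = m) :
    (M.submatrix (fun i : {i : Fin N // i ∈ s} => (i : Fin N))
      (fun i : {i : Fin N // i ∈ s} => (i : Fin N))).det
    = (M.submatrix (fun t : Fin m => s.orderEmbOfFin h t)
        (fun t : Fin m => s.orderEmbOfFin h t)).det := by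
  rw [← Matrix.det_submatrix_equiv_self (s.orderIsoOfFin h).toEquiv, Matrix.submatrix_submatrix]
  rfl

end
end Helpers


lemma det_fromBlocks_offdiag {R : Type*} [CommRing R] (X Y Z : Matrix (Fin 2) (Fin 2) R) :
    (Matrix.fromBlocks X Y Z (0 : Matrix (Fin 2) (Fin 2) R)).det = Y.det * Z.det := by
  have h : Matrix.fromBlocks X Y Z (0 : Matrix (Fin 2) (Fin 2) R)
      = (Matrix.fromBlocks Y X 0 Z).submatrix id (Equiv.sumComm (Fin 2) (Fin 2)) := by
    ext i j; rcases i with i|i <;> rcases j with j|j <;> rfl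
  have hsign : Equiv.Perm.sign (Equiv.sumComm (Fin 2) (Fin 2)) = 1 := by decide
  rw [h, Matrix.det_permute' (Equiv.sumComm (Fin 2) (Fin 2)), hsign,
    Matrix.det_fromBlocks_zero₂₁]
  push_cast
  ring

lemma core_identity (n : ℕ) (K : Matrix (Fin n) (Fin n) ℝ) (hK : K.transpose = -K)
    (v x : Fin n → ℝ) (hindep : LinearIndependent ℝ ![v, x])
    (P : Matrix (Fin n) (Fin n) ℝ)
    (hPv : P.mulVec v = 0) (hPx : P.mulVec x = 0)
    (hPfix : ∀ y : Fin n → ℝ, (∑ i, v i * y i) = 0 → (∑ i, x i * y i) = 0 →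
      P.mulVec y = y)
    (t : ℝ) (ht : t ≠ 0) :
    t ^ 2 * (Matrix.diagonal (fun i : Fin (n+2) => if (i : ℕ) < n then t else 0)
        + Kprime n K v x).det
      = ((∑ i, (v i) ^ 2) * (∑ i, (x i) ^ 2) - (∑ i, v i * x i) ^ 2)
        * (Matrix.diagonal (fun _ : Fin n => t) + P * K * P).det := by
  classical
  set A : Matrix (Fin n) (Fin n) ℝ := t • 1 + K with hA_def
  set B : Matrix (Fin n) (Fin 2) ℝ := Matrix.of fun i j => if j = 0 then v i else x i with hB_def
  set G : Matrix (Fin 2) (Fin 2) ℝ := Bᵀ * B with hG_def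
  -- A is invertible
  have hsq : ∀ y : Fin n → ℝ, (∑ i, y i * y i) = 0 → y = 0 := by
    intro y hy
    funext i
    have h8 : ∀ j ∈ Finset.univ, (0:ℝ) ≤ y j * y j := fun j _ => mul_self_nonneg _
    have := (Finset.sum_eq_zero_iff_of_nonneg h8).1 hy i (Finset.mem_univ i)
    exact mul_self_eq_zero.1 this
  have hskew : ∀ y : Fin n → ℝ, y ⬝ᵥ (K *ᵥ y) = 0 := by
    intro y
    have h1 : y ⬝ᵥ (K *ᵥ y) = (Kᵀ *ᵥ y) ⬝ᵥ y := by
      rw [Matrix.dotProduct_mulVec, ← Matrix.vecMul_transpose, Matrix.transpose_transpose]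
    rw [hK] at h1
    have h2 : ((-K) *ᵥ y) ⬝ᵥ y = -(y ⬝ᵥ (K *ᵥ y)) := by
      rw [Matrix.neg_mulVec, neg_dotProduct, dotProduct_comm]
    rw [h2] at h1
    linarith
  have hAdet : IsUnit A.det := by
    rw [isUnit_iff_ne_zero]
    intro h0
    obtain ⟨y, hy0, hy⟩ := (Matrix.exists_mulVec_eq_zero_iff).2 h0
    have h1 : A *ᵥ y = t • y + K *ᵥ y := by
      rw [hA_def, Matrix.add_mulVec, Matrix.smul_mulVec, Matrix.one_mulVec]
    have h2 : y ⬝ᵥ (A *ᵥ y) = t * (y ⬝ᵥ y) + y ⬝ᵥ (K *ᵥ y) := by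
      rw [h1, dotProduct_add, dotProduct_smul, smul_eq_mul]
    rw [hy, dotProduct_zero, hskew y, add_zero] at h2
    have h3 : y ⬝ᵥ y = 0 := by
      rcases mul_eq_zero.1 h2.symm with h | h
      · exact absurd h ht
      · exact h
    exact hy0 (hsq y h3)
  -- G is invertible
  have hBmulVec : ∀ c : Fin 2 → ℝ, B *ᵥ c = fun i => c 0 * v i + c 1 * x i := by
    intro c
    funext i
    simp [hB_def, Matrix.mulVec, dotProduct, Fin.sum_univ_two, mul_comm]
  have hindep' : ∀ c : Fin 2 → ℝ, B *ᵥ c = 0 → c = 0 := by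
    intro c hc
    have h1 : c 0 • v + c 1 • x = 0 := by
      funext i
      have := congrFun hc i
      rw [hBmulVec c] at this
      simpa using this
    have h2 := Fintype.linearIndependent_iff.1 hindep (fun j => c j)
    have h3 : ∑ j : Fin 2, c j • ![v, x] j = 0 := by
      rw [Fin.sum_univ_two]
      simpa using h1
    funext j
    fin_cases j
    · exact h2 h3 0
    · exact h2 h3 1
  have hGdet : IsUnit G.det := by
    rw [isUnit_iff_ne_zero]
    intro h0
    obtain ⟨c, hc0, hc⟩ := (Matrix.exists_mulVec_eq_zero_iff).2 h0
    have h1 : c ⬝ᵥ (G *ᵥ c) = (B *ᵥ c) ⬝ᵥ (B *ᵥ c) := by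
      rw [hG_def, ← Matrix.mulVec_mulVec, Matrix.dotProduct_mulVec, Matrix.vecMul_transpose]
    rw [hc, dotProduct_zero] at h1
    have h2 : B *ᵥ c = 0 := hsq _ h1.symm
    exact hc0 (hindep' c h2)
  -- det G is the Gram determinant
  have hGentry : ∀ a b : Fin 2, G a b = ∑ i, B i a * B i b := by
    intro a b
    simp [hG_def, Matrix.mul_apply, Matrix.transpose_apply]
  have hGval : G.det = (∑ i, (v i) ^ 2) * (∑ i, (x i) ^ 2) - (∑ i, v i * x i) ^ 2 := by
    rw [Matrix.det_fin_two, hGentry, hGentry, hGentry, hGentry]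
    simp only [hB_def, Matrix.of_apply]
    norm_num [pow_two]
    left
    exact Finset.sum_congr rfl fun i _ => mul_comm _ _
  set Q : Matrix (Fin n) (Fin n) ℝ := B * G⁻¹ * Bᵀ with hQ_def
  -- P = 1 - Q
  have hGiG : G⁻¹ * G = 1 := Matrix.nonsing_inv_mul G hGdet
  have hGGi : G * G⁻¹ = 1 := Matrix.mul_nonsing_inv G hGdet
  have hPB : P * B = 0 := by
    ext i j
    fin_cases j
    · have := congrFun hPv i
      simpa [Matrix.mul_apply, hB_def, Matrix.mulVec, dotProduct] using this
    · have := congrFun hPx i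
      simpa [Matrix.mul_apply, hB_def, Matrix.mulVec, dotProduct] using this
  have hBtQ : Bᵀ * (1 - Q) = 0 := by
    rw [Matrix.mul_sub, Matrix.mul_one, hQ_def, ← Matrix.mul_assoc, ← Matrix.mul_assoc,
      ← hG_def, Matrix.mul_assoc G, ← Matrix.mul_assoc G]
    rw [hGGi, Matrix.one_mul, sub_self]
  have hPQzero : P * Q = 0 := by
    rw [hQ_def, ← Matrix.mul_assoc, ← Matrix.mul_assoc, hPB, Matrix.zero_mul, Matrix.zero_mul]
  have hPQ : P = 1 - Q := by
    have hP1Q : P * (1 - Q) = 1 - Q := by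
      ext i j
      have hv0 : ∑ l, v l * (1 - Q) l j = 0 := by
        have := congrFun (congrFun hBtQ 0) j
        simpa [Matrix.mul_apply, hB_def, Matrix.transpose_apply] using this
      have hx0 : ∑ l, x l * (1 - Q) l j = 0 := by
        have := congrFun (congrFun hBtQ 1) j
        simpa [Matrix.mul_apply, hB_def, Matrix.transpose_apply] using this
      have := congrFun (hPfix (fun l => (1 - Q) l j) hv0 hx0) i
      simpa [Matrix.mulVec, dotProduct, Matrix.mul_apply] using this
    have hP1Q' : P * (1 - Q) = P := by
      rw [Matrix.mul_sub, Matrix.mul_one, hPQzero, sub_zero]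
    rw [← hP1Q', hP1Q]
  -- the bordered matrix in block form
  have hblock : (Matrix.diagonal (fun i : Fin (n+2) => if (i : ℕ) < n then t else 0)
        + Kprime n K v x).det
      = (Matrix.fromBlocks A B (-Bᵀ) 0).det := by
    rw [← Matrix.det_submatrix_equiv_self finSumFinEquiv]
    congr 1
    ext i j
    rcases i with i | i <;> rcases j with j | j
    · -- top-left block
      by_cases h : i = j
      · subst h
        simp [Kprime, Matrix.diagonal_apply, hA_def, Matrix.one_apply, i.isLt]
      · have h' : ¬ (i : ℕ) = (j : ℕ) := fun hh => h (Fin.ext hh)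
        simp [Kprime, Matrix.diagonal_apply, hA_def, Matrix.one_apply, Fin.ext_iff, h, h',
          i.isLt, j.isLt]
    · -- top-right block
      have hne : ¬ ((Fin.castAdd 2 i : ℕ) = (Fin.natAdd n j : ℕ)) := by
        simp only [Fin.coe_castAdd, Fin.coe_natAdd]
        omega
      simp only [Matrix.submatrix_apply, finSumFinEquiv_apply_left, finSumFinEquiv_apply_right, Matrix.fromBlocks_apply₁₂, Matrix.add_apply]
      rw [Matrix.diagonal_apply_ne _ (fun hh => hne (congrArg Fin.val hh)), zero_add]
      fin_cases j <;>
        simp [Kprime, hB_def, i.isLt] <;> omega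
    · -- bottom-left block
      have hne : ¬ ((Fin.natAdd n i : ℕ) = (Fin.castAdd 2 j : ℕ)) := by
        simp only [Fin.coe_castAdd, Fin.coe_natAdd]
        omega
      simp only [Matrix.submatrix_apply, finSumFinEquiv_apply_left, finSumFinEquiv_apply_right, Matrix.fromBlocks_apply₂₁, Matrix.add_apply]
      rw [Matrix.diagonal_apply_ne _ (fun hh => hne (congrArg Fin.val hh)), zero_add]
      fin_cases i <;>
        simp [Kprime, hB_def, j.isLt] <;> omega
    · -- bottom-right block
      have hni : ¬ ((Fin.natAdd n i : ℕ) < n) := by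
        simp only [Fin.coe_natAdd]; omega
      by_cases h : i = j
      · subst h
        simp [Kprime, Matrix.diagonal_apply, hni]
      · have h' : ¬ (i : ℕ) = (j : ℕ) := fun hh => h (Fin.ext hh)
        simp [Kprime, Matrix.diagonal_apply, Fin.ext_iff, h', hni]
  -- left-hand side via Schur complement
  set S : Matrix (Fin 2) (Fin 2) ℝ := Bᵀ * A⁻¹ * B with hS_def
  have hlhs : (Matrix.fromBlocks A B (-Bᵀ) 0).det = A.det * S.det := by
    have : Invertible A := A.invertibleOfIsUnitDet hAdet
    rw [Matrix.det_fromBlocks₁₁, Matrix.invOf_eq_nonsing_inv]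
    congr 1
    rw [hS_def]
    simp [Matrix.neg_mul, Matrix.mul_assoc]
  -- right-hand side
  set W₁ : Matrix (Fin 2) (Fin n) ℝ := G⁻¹*Bᵀ*A*B*G⁻¹*Bᵀ + t•(G⁻¹*Bᵀ) - G⁻¹*Bᵀ*A with hW1_def
  set W₂ : Matrix (Fin 2) (Fin n) ℝ := -(G⁻¹*Bᵀ) with hW2_def
  have hcontr : Bᵀ * (B * (G⁻¹ * Bᵀ)) = Bᵀ := by
    rw [← Matrix.mul_assoc, ← hG_def, ← Matrix.mul_assoc, hGGi, Matrix.one_mul]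
  have hdiagt : Matrix.diagonal (fun _ : Fin n => t) = t • (1 : Matrix (Fin n) (Fin n) ℝ) :=
    (Matrix.smul_one_eq_diagonal t).symm
  have hKA : K = A - t • (1 : Matrix (Fin n) (Fin n) ℝ) := by
    rw [hA_def]; abel
  have hQQ : Q * Q = Q := by
    rw [hQ_def]
    simp only [Matrix.mul_assoc]
    rw [hcontr]
  have e1 : B * W₁ + (A*B) * W₂ = Q*A*Q + t•Q - Q*A - A*Q := by
    rw [hW1_def, hW2_def, hQ_def]
    simp only [Matrix.mul_add, Matrix.mul_sub, Matrix.mul_smul, Matrix.mul_neg,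
      Matrix.smul_mul, Matrix.mul_assoc]
    abel
  have e2 : ∀ A' Q' : Matrix (Fin n) (Fin n) ℝ, Q' * Q' = Q' →
      t•(1 : Matrix (Fin n) (Fin n) ℝ) + (1-Q')*(A' - t•1)*(1-Q')
      = A' + (Q'*A'*Q' + t•Q' - Q'*A' - A'*Q') := by
    intro A' Q' hQ'
    simp only [Matrix.sub_mul, Matrix.mul_sub, Matrix.smul_mul, Matrix.mul_smul,
      smul_sub, Matrix.one_mul, Matrix.mul_one, hQ']
    abel
  have halg : Matrix.diagonal (fun _ : Fin n => t) + P * K * P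
      = A + Matrix.fromCols B (A*B) * Matrix.fromRows W₁ W₂ := by
    rw [Matrix.fromCols_mul_fromRows, e1, hdiagt, hPQ, hKA, e2 A Q hQQ]
  have hgb : G⁻¹ * (Bᵀ * B) = 1 := by rw [← hG_def, hGiG]
  have hblocks4 : 1 + Matrix.fromRows W₁ W₂ * A⁻¹ * Matrix.fromCols B (A*B)
      = Matrix.fromBlocks (1 + W₁*A⁻¹*B) (t•(1 : Matrix (Fin 2) (Fin 2) ℝ)) (-(G⁻¹*S)) 0 := by
    have hb12 : W₁ * A⁻¹ * (A * B) = t • (1 : Matrix (Fin 2) (Fin 2) ℝ) := by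
      rw [Matrix.mul_assoc W₁, Matrix.nonsing_inv_mul_cancel_left A B hAdet, hW1_def]
      simp only [Matrix.sub_mul, Matrix.add_mul, Matrix.smul_mul,
        Matrix.mul_assoc, hgb, Matrix.mul_one]
      abel
    have hb21 : W₂ * A⁻¹ * B = -(G⁻¹ * S) := by
      rw [hW2_def, hS_def]
      simp only [Matrix.neg_mul, Matrix.mul_assoc]
    have hb22 : (1 : Matrix (Fin 2) (Fin 2) ℝ) + W₂ * A⁻¹ * (A * B) = 0 := by
      rw [Matrix.mul_assoc W₂, Matrix.nonsing_inv_mul_cancel_left A B hAdet, hW2_def]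
      simp only [Matrix.neg_mul, Matrix.mul_assoc, hgb]
      simp
    rw [Matrix.fromRows_mul, Matrix.fromRows_mul_fromCols,
      ← Matrix.fromBlocks_one, Matrix.fromBlocks_add, zero_add, zero_add, hb12, hb21, hb22]
  have hrhs : (Matrix.diagonal (fun _ : Fin n => t) + P * K * P).det
      = A.det * (t^2 * (G.det⁻¹ * S.det)) := by
    rw [halg, Matrix.det_add_mul _ _ hAdet, hblocks4, det_fromBlocks_offdiag]
    congr 1
    rw [Matrix.det_smul, Matrix.det_one, Fintype.card_fin, mul_one]
    congr 1
    rw [Matrix.det_neg, Fintype.card_fin, Matrix.det_mul, Matrix.det_nonsing_inv]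
    simp
  rw [hblock, hlhs, hrhs, hGval.symm]
  have h1 : G.det ≠ 0 := hGdet.ne_zero
  field_simp

/-- Let `K' = [[K*, v*, x*],[−v*ᵀ, 0, 0],[−x*ᵀ, 0, 0]]` with `K* ∈ so(n)` and `v*, x*`
linearly independent, and let `P` be the orthogonal projection of `ℝⁿ` onto
`span{v*, x*}^⊥`.  For each even `k`, the sum of all principal `(k+4)×(k+4)` minors of `K'`
whose index sets contain both `n+1` and `n+2` equals
`(‖v*‖²‖x*‖² − (v*·x*)²) · tr(Λᵏ(PK*P))`, where `tr(Λᵏ M)` is the sum of all principal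
`k×k` minors of `M`. -/
theorem Kprime_minors_sum (n : ℕ) (K : Matrix (Fin n) (Fin n) ℝ)
    (hK : K.transpose = -K) (v x : Fin n → ℝ)
    (hindep : LinearIndependent ℝ ![v, x])
    (P : Matrix (Fin n) (Fin n) ℝ)
    -- `P` is the orthogonal projection onto `span{v*, x*}^⊥`
    (hPP : P * P = P) (hPsymm : P.transpose = P)
    (hPv : P.mulVec v = 0) (hPx : P.mulVec x = 0)
    (hPfix : ∀ y : Fin n → ℝ, (∑ i, v i * y i) = 0 → (∑ i, x i * y i) = 0 →
      P.mulVec y = y)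
    (k : ℕ) (hk : Even k) :
    (∑ s : Finset (Fin (n + 2)),
      if h : s.card = k + 4 ∧ (⟨n, by omega⟩ : Fin (n + 2)) ∈ s ∧
          (⟨n + 1, by omega⟩ : Fin (n + 2)) ∈ s then
        ((Kprime n K v x).submatrix (fun t : Fin (k + 4) => s.orderEmbOfFin h.1 t)
          (fun t => s.orderEmbOfFin h.1 t)).det
      else 0) =
    ((∑ i, (v i) ^ 2) * (∑ i, (x i) ^ 2) - (∑ i, v i * x i) ^ 2) *
      ∑ s : Finset (Fin n),
        if h : s.card = k then
          ((P * K * P).submatrix (fun t : Fin k => s.orderEmbOfFin h t)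
            (fun t => s.orderEmbOfFin h t)).det
        else 0 := by
  classical
  by_cases hkn : k ≤ n
  swap
  · -- degenerate case k > n : both sides vanish
    have hL : (∑ s : Finset (Fin (n + 2)),
        if h : s.card = k + 4 ∧ (⟨n, by omega⟩ : Fin (n + 2)) ∈ s ∧
            (⟨n + 1, by omega⟩ : Fin (n + 2)) ∈ s then
          ((Kprime n K v x).submatrix (fun t : Fin (k + 4) => s.orderEmbOfFin h.1 t)
            (fun t => s.orderEmbOfFin h.1 t)).det
        else 0) = 0 := by
      refine Finset.sum_eq_zero fun s _ => ?_
      rw [dif_neg]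
      rintro ⟨h1, -, -⟩
      have h2 : s.card ≤ n + 2 := by
        simpa using s.card_le_univ
      omega
    have hR : (∑ s : Finset (Fin n),
        if h : s.card = k then
          ((P * K * P).submatrix (fun t : Fin k => s.orderEmbOfFin h t)
            (fun t => s.orderEmbOfFin h t)).det
        else 0) = 0 := by
      refine Finset.sum_eq_zero fun s _ => ?_
      rw [dif_neg]
      intro h1
      have h2 : s.card ≤ n := by simpa using s.card_le_univ
      omega
    rw [hL, hR, mul_zero]
  -- main case
  set b0 : Fin (n+2) := ⟨n, by omega⟩ with hb0
  set b1 : Fin (n+2) := ⟨n+1, by omega⟩ with hb1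
  set Gram : ℝ := (∑ i, (v i) ^ 2) * (∑ i, (x i) ^ 2) - (∑ i, v i * x i) ^ 2 with hGram
  set dX : Fin (n+2) → ℝ[X] := fun i => if (i : ℕ) < n then (X : ℝ[X]) else 0 with hdX
  set p : ℝ[X] := (Matrix.diagonal dX + (Kprime n K v x).map C).det with hp_def
  set q : ℝ[X] := (Matrix.diagonal (fun _ : Fin n => (X : ℝ[X])) + (P * K * P).map C).det
    with hq_def
  -- evaluation of p and q
  have hevalp : ∀ t : ℝ, eval t p = (Matrix.diagonal
      (fun i : Fin (n+2) => if (i : ℕ) < n then t else 0) + Kprime n K v x).det := by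
    intro t
    have h1 := (RingHom.map_det (evalRingHom t) (Matrix.diagonal dX + (Kprime n K v x).map C)).symm
    rw [hp_def, show eval t ((Matrix.diagonal dX + (Kprime n K v x).map C)).det
        = evalRingHom t ((Matrix.diagonal dX + (Kprime n K v x).map C)).det from rfl, ← h1]
    congr 1
    ext i j
    simp only [RingHom.mapMatrix_apply, Matrix.map_apply, Matrix.add_apply, eval_add,
      Matrix.diagonal_apply, hdX, apply_ite (eval t), eval_X, eval_zero, eval_C, coe_evalRingHom]
  have hevalq : ∀ t : ℝ, eval t q = (Matrix.diagonal (fun _ : Fin n => t) + P * K * P).det := by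
    intro t
    have h1 := (RingHom.map_det (evalRingHom t)
      (Matrix.diagonal (fun _ : Fin n => (X : ℝ[X])) + (P * K * P).map C)).symm
    rw [hq_def, show eval t ((Matrix.diagonal (fun _ : Fin n => (X : ℝ[X])) + (P * K * P).map C)).det
        = evalRingHom t ((Matrix.diagonal (fun _ : Fin n => (X : ℝ[X])) + (P * K * P).map C)).det
        from rfl, ← h1]
    congr 1
    ext i j
    simp only [RingHom.mapMatrix_apply, Matrix.map_apply, Matrix.add_apply, eval_add,
      Matrix.diagonal_apply, apply_ite (eval t), eval_X, eval_zero, eval_C, coe_evalRingHom]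
  -- the key polynomial identity
  have key : X ^ 2 * p = C Gram * q := by
    apply Polynomial.eq_of_infinite_eval_eq
    apply Set.Infinite.mono (s := {t : ℝ | t ≠ 0})
    · intro t ht
      simp only [Set.mem_setOf_eq] at ht ⊢
      rw [eval_mul, eval_mul, eval_pow, eval_X, eval_C, hevalp, hevalq]
      exact core_identity n K hK v x hindep P hPv hPx hPfix t ht
    · exact (Set.finite_singleton (0:ℝ)).infinite_compl
  -- expansion of p
  have hcard2 : ∀ s : Finset (Fin (n+2)), s.card ≤ n + 2 := by
    intro s; simpa using s.card_le_univ
  have hXp : X ^ 2 * p = ∑ s : Finset (Fin (n+2)),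
      (if b0 ∈ s ∧ b1 ∈ s then
        C (((Kprime n K v x).submatrix (fun i : {i : Fin (n+2) // i ∈ s} => (i : Fin (n+2)))
            (fun i : {i : Fin (n+2) // i ∈ s} => (i : Fin (n+2)))).det) * X ^ (n + 4 - s.card)
       else 0) := by
    rw [hp_def, det_diagonal_add dX ((Kprime n K v x).map C), Finset.mul_sum]
    refine Finset.sum_congr rfl fun s _ => ?_
    have hminor : (((Kprime n K v x).map C).submatrix
          (fun i : {i : Fin (n+2) // i ∈ s} => (i : Fin (n+2)))
          (fun i : {i : Fin (n+2) // i ∈ s} => (i : Fin (n+2)))).det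
        = C (((Kprime n K v x).submatrix (fun i : {i : Fin (n+2) // i ∈ s} => (i : Fin (n+2)))
            (fun i : {i : Fin (n+2) // i ∈ s} => (i : Fin (n+2)))).det) := by
      rw [RingHom.map_det]
      rfl
    by_cases hb : b0 ∈ s ∧ b1 ∈ s
    · rw [if_pos hb]
      have hprod : (∏ i ∈ sᶜ, dX i) = X ^ (n + 2 - s.card) := by
        have hall : ∀ i ∈ sᶜ, dX i = X := by
          intro i hi
          rw [Finset.mem_compl] at hi
          have h0 : i ≠ b0 := fun hh => hi (hh ▸ hb.1)
          have h1 : i ≠ b1 := fun hh => hi (hh ▸ hb.2)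
          have hv0 : (i : ℕ) ≠ n := fun hh => h0 (Fin.ext (by simp [hb0, hh]))
          have hv1 : (i : ℕ) ≠ n + 1 := fun hh => h1 (Fin.ext (by simp [hb1, hh]))
          have : (i : ℕ) < n := by have := i.isLt; omega
          simp [hdX, this]
        rw [Finset.prod_congr rfl hall, Finset.prod_const, Finset.card_compl]
        simp
      rw [hprod, hminor]
      have h2 : n + 4 - s.card = 2 + (n + 2 - s.card) := by have := hcard2 s; omega
      rw [h2, pow_add]
      ring
    · rw [if_neg hb]
      have : ∃ i ∈ sᶜ, dX i = 0 := by
        by_cases h0 : b0 ∈ s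
        · have h1 : b1 ∉ s := fun hh => hb ⟨h0, hh⟩
          exact ⟨b1, Finset.mem_compl.2 h1, by simp [hdX, hb1]⟩
        · exact ⟨b0, Finset.mem_compl.2 h0, by simp [hdX, hb0]⟩
      obtain ⟨i, hi, hzero⟩ := this
      rw [Finset.prod_eq_zero hi hzero, zero_mul, mul_zero]
  -- expansion of q
  have hcard1 : ∀ s : Finset (Fin n), s.card ≤ n := by
    intro s; simpa using s.card_le_univ
  have hXq : q = ∑ s : Finset (Fin n),
      C (((P * K * P).submatrix (fun i : {i : Fin n // i ∈ s} => (i : Fin n))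
          (fun i : {i : Fin n // i ∈ s} => (i : Fin n))).det) * X ^ (n - s.card) := by
    rw [hq_def, det_diagonal_add (fun _ : Fin n => (X : ℝ[X])) ((P * K * P).map C)]
    refine Finset.sum_congr rfl fun s _ => ?_
    have hminor : (((P * K * P).map C).submatrix
          (fun i : {i : Fin n // i ∈ s} => (i : Fin n))
          (fun i : {i : Fin n // i ∈ s} => (i : Fin n))).det
        = C (((P * K * P).submatrix (fun i : {i : Fin n // i ∈ s} => (i : Fin n))
            (fun i : {i : Fin n // i ∈ s} => (i : Fin n))).det) := by
      rw [RingHom.map_det]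
      rfl
    rw [hminor, Finset.prod_const, Finset.card_compl, Fintype.card_fin]
    exact mul_comm _ _
  -- take the coefficient of X^(n-k) on both sides of `key`
  have hcL : (X ^ 2 * p).coeff (n - k) = (∑ s : Finset (Fin (n + 2)),
      if h : s.card = k + 4 ∧ b0 ∈ s ∧ b1 ∈ s then
        ((Kprime n K v x).submatrix (fun t : Fin (k + 4) => s.orderEmbOfFin h.1 t)
          (fun t => s.orderEmbOfFin h.1 t)).det
      else 0) := by
    rw [hXp, Polynomial.finset_sum_coeff]
    refine Finset.sum_congr rfl fun s _ => ?_
    by_cases hb : b0 ∈ s ∧ b1 ∈ s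
    · rw [if_pos hb, Polynomial.coeff_C_mul, Polynomial.coeff_X_pow]
      by_cases hc : s.card = k + 4
      · rw [if_pos (by have := hcard2 s; omega), mul_one, dif_pos ⟨hc, hb.1, hb.2⟩]
        exact det_submatrix_subtype (Kprime n K v x) s hc
      · rw [if_neg (by have := hcard2 s; omega), mul_zero, dif_neg (fun hh => hc hh.1)]
    · rw [if_neg hb, Polynomial.coeff_zero, dif_neg (fun hh => hb ⟨hh.2.1, hh.2.2⟩)]
  have hcR : (C Gram * q).coeff (n - k) = Gram * ∑ s : Finset (Fin n),
      if h : s.card = k then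
        ((P * K * P).submatrix (fun t : Fin k => s.orderEmbOfFin h t)
          (fun t => s.orderEmbOfFin h t)).det
      else 0 := by
    rw [Polynomial.coeff_C_mul, hXq, Polynomial.finset_sum_coeff]
    congr 1
    refine Finset.sum_congr rfl fun s _ => ?_
    rw [Polynomial.coeff_C_mul, Polynomial.coeff_X_pow]
    by_cases hc : s.card = k
    · rw [if_pos (by have := hcard1 s; omega), mul_one, dif_pos hc]
      exact det_submatrix_subtype (P * K * P) s hc
    · rw [if_neg (by have := hcard1 s; omega), mul_zero, dif_neg hc]
  rw [← hcL, key, hcR]
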